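/- If a point P = (x0:x1:x2:x3) lies on the plane x0 = 0 and on the surface D = 0 but not on the twisted cubic T, then P is a smooth point of the quartic D = 0, and hence min over i of the multiplicity at P of x_i*D^3 is at most 3 (achieved by some coordinate x_i not vanishing at P). -/
import Mathlib


open MvPolynomial in
/-- The discriminant quartic as a polynomial in four variables. -/
noncomputable def Dpoly (k : Type*) [Field k] : MvPolynomial (Fin 4) k :=
  X 0 ^ 2 * X 3 ^ 2 - 3 * X 1 ^ 2 * X 2 ^ 2 - 6 * X 0 * X 1 * X 2 * X 3 +
    4 * X 0 * X 2 ^ 3 + 4 * X 3 * X 1 ^ 3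

open MvPolynomial in
lemma Dpoly_eq {k : Type*} [Field k] : Dpoly k =
    X 0 ^ 2 * X 3 ^ 2 - C 3 * X 1 ^ 2 * X 2 ^ 2 - C 6 * X 0 * X 1 * X 2 * X 3 +
    C 4 * X 0 * X 2 ^ 3 + C 4 * X 3 * X 1 ^ 3 := by
  simp [Dpoly, map_ofNat]

open MvPolynomial in
lemma pderiv_mem_pow {k : Type*} [CommRing k] {σ : Type*} (m : Ideal (MvPolynomial σ k))
    (i : σ) : ∀ (n : ℕ) (f : MvPolynomial σ k), f ∈ m ^ (n + 1) → pderiv i f ∈ m ^ n := by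
  intro n
  induction n with
  | zero => intro f _; simp [Ideal.one_eq_top]
  | succ n ih =>
    intro f hf
    rw [pow_succ] at hf
    refine Submodule.mul_induction_on hf ?_ ?_
    · intro a ha b hb
      rw [pderiv_mul]
      refine add_mem ?_ ?_
      · rw [pow_succ]; exact Ideal.mul_mem_mul (ih a ha) hb
      · exact Ideal.mul_mem_right _ _ ha
    · intro f g hfg hg
      rw [map_add]; exact add_mem hfg hg

open MvPolynomial in
lemma eval_eq_zero_of_mem {k : Type*} [CommRing k] {σ : Type*} (x : σ → k)
    {f : MvPolynomial σ k}
    (hf : f ∈ Ideal.span (Set.range fun j : σ => X j - C (x j))) : eval x f = 0 := by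
  have : Ideal.span (Set.range fun j : σ => X j - C (x j)) ≤ RingHom.ker (eval x) := by
    rw [Ideal.span_le]
    rintro _ ⟨j, rfl⟩
    simp [RingHom.mem_ker]
  exact this hf

open MvPolynomial in
lemma eval_triple_deriv {k : Type*} [Field k] (x : Fin 4 → k) (p : MvPolynomial (Fin 4) k)
    (i j : Fin 4) (hij : j ≠ i) (hp : eval x p = 0) :
    eval x (pderiv j (pderiv j (pderiv j (X i * p ^ 3)))) =
      6 * x i * (eval x (pderiv j p)) ^ 3 := by
  have h3 : p ^ 3 = p * p * p := by ring
  rw [h3]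
  simp only [pderiv_mul, pderiv_X_of_ne hij, zero_mul, map_add, map_mul, mul_zero, zero_add,
    add_zero, eval_X, hp]
  ring

open MvPolynomial in
lemma not_mem_pow_four {k : Type*} [Field k] [CharZero k] (x : Fin 4 → k)
    (p : MvPolynomial (Fin 4) k) (i j : Fin 4) (hij : j ≠ i) (hxi : x i ≠ 0)
    (hp : eval x p = 0) (hpj : eval x (pderiv j p) ≠ 0) :
    X i * p ^ 3 ∉
      (Ideal.span (Set.range fun j : Fin 4 => X j - C (x j)) : Ideal (MvPolynomial (Fin 4) k)) ^ 4 := by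
  intro hmem
  have h1 := pderiv_mem_pow _ j 3 _ hmem
  have h2 := pderiv_mem_pow _ j 2 _ h1
  have h3 := pderiv_mem_pow _ j 1 _ h2
  rw [pow_one] at h3
  have := eval_eq_zero_of_mem x h3
  rw [eval_triple_deriv x p i j hij hp] at this
  have h6 : (6 : k) ≠ 0 := by norm_num
  exact (mul_ne_zero (mul_ne_zero h6 hxi) (pow_ne_zero 3 hpj)) this

open MvPolynomial in
/-- If a point `P` lies on the plane `x0 = 0` and on the surface `D = 0` but not on the
twisted cubic, then `P` is a smooth point of the quartic `D = 0`, and hence the minimum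
over `i` of the multiplicity at `P` of `x_i * D^3` is at most `3` (i.e. some
`X i * D^3` is not in the fourth power of the maximal ideal at `P`). -/
theorem smooth_points_off_twisted_cubic {k : Type*} [Field k] [IsAlgClosed k]
    [CharZero k] (x : Fin 4 → k) (hx : x ≠ 0) (h0 : x 0 = 0)
    (hD : eval x (Dpoly k) = 0)
    (hT : ¬ ∃ t0 t1 : k, x = ![t0 ^ 3, t0 ^ 2 * t1, t0 * t1 ^ 2, t1 ^ 3]) :
    (∃ i : Fin 4, eval x (pderiv i (Dpoly k)) ≠ 0) ∧
    (∃ i : Fin 4,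
      X i * Dpoly k ^ 3 ∉
        (Ideal.span (Set.range fun j : Fin 4 => X j - C (x j)) : Ideal (MvPolynomial (Fin 4) k)) ^ 4) := by
  have hd0 : eval x (pderiv (0 : Fin 4) (Dpoly k)) =
      2*(x 0)*(x 3)^2 - 6*(x 1)*(x 2)*(x 3) + 4*(x 2)^3 := by
    simp [Dpoly_eq, pderiv_mul, pderiv_pow, pderiv_X_of_ne, pderiv_X_self, pderiv_C]
    ring
  have hd3 : eval x (pderiv (3 : Fin 4) (Dpoly k)) =
      2*(x 0)^2*(x 3) - 6*(x 0)*(x 1)*(x 2) + 4*(x 1)^3 := by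
    simp [Dpoly_eq, pderiv_mul, pderiv_pow, pderiv_X_of_ne, pderiv_X_self, pderiv_C]
    ring
  by_cases h1 : x 1 = 0
  · -- x1 = 0 : need x2 ≠ 0
    have h2 : x 2 ≠ 0 := by
      intro h2
      have h3 : x 3 ≠ 0 := by
        intro h3
        apply hx
        funext i
        fin_cases i <;> simp_all
      obtain ⟨t1, ht1⟩ := IsAlgClosed.exists_pow_nat_eq (x 3) (n := 3) (by norm_num)
      exact hT ⟨0, t1, by funext i; fin_cases i <;> simp_all⟩
    have hj : eval x (pderiv (0 : Fin 4) (Dpoly k)) ≠ 0 := by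
      rw [hd0, h0, h1]
      ring_nf
      intro h
      simp [pow_eq_zero_iff] at h
      exact h2 h
    refine ⟨⟨0, hj⟩, 2, not_mem_pow_four x (Dpoly k) 2 0 (by decide) h2 hD hj⟩
  · -- x1 ≠ 0
    have hj : eval x (pderiv (3 : Fin 4) (Dpoly k)) ≠ 0 := by
      rw [hd3, h0]
      ring_nf
      intro h
      simp [pow_eq_zero_iff] at h
      exact h1 h
    refine ⟨⟨3, hj⟩, 1, not_mem_pow_four x (Dpoly k) 1 3 (by decide) h1 hD hj⟩
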